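/- The PF-D0 coefficient function b4 satisfies lim_{v→0⁺} b4(v) = −67855831/2217600 and lim_{v→0⁺} (b4(v) − (−67855831/2217600))/v² = 16301796103/2421619200; in particular b4 tends to the corresponding coefficient of the classical Quinlan–Tremaine method as v → 0. -/

import Mathlib

open Filter

/-- The variable coefficient `b₁(v)` of the phase-fitted method PF-D0. -/
noncomputable def pfb1 (v : ℝ) : ℝ :=
  (((-124184636) * Real.cos v + 70378348 * Real.cos (2 * v) - 24862148 * Real.cos (3 * v)
        + 5153611 * Real.cos (4 * v)) * v ^ 2
      + 25 * (3013169 * v ^ 2 - 16128 * Real.cos (3 * v) + 32256 * Real.cos (4 * v)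
        - 32256 * Real.cos (5 * v) + 16128 * Real.cos (6 * v)))
    / (206438400 * v ^ 2 * (Real.sin (v / 2)) ^ 10)

/-- The variable coefficient `b₂(v)` of the phase-fitted method PF-D0. -/
noncomputable def pfb2 (v : ℝ) : ℝ :=
  (v ^ 2 * (159588050 * Real.cos v - 85350160 * Real.cos (2 * v)
        + 16708985 * Real.cos (3 * v) - 5153611 * Real.cos (5 * v))
      - 16 * (6496079 * v ^ 2 - 252000 * Real.cos (3 * v) + 504000 * Real.cos (4 * v)
        - 504000 * Real.cos (5 * v) + 252000 * Real.cos (6 * v)))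
    / (206438400 * v ^ 2 * (Real.sin (v / 2)) ^ 10)

/-- The variable coefficient `b₃(v)` of the phase-fitted method PF-D0. -/
noncomputable def pfb3 (v : ℝ) : ℝ :=
  (((-367257540) * Real.cos v + 183567900 * Real.cos (2 * v)
        - 16708985 * Real.cos (4 * v) + 24862148 * Real.cos (5 * v)) * v ^ 2
      + 81 * (3175117 * v ^ 2 - 224000 * Real.cos (3 * v) + 448000 * Real.cos (4 * v)
        - 448000 * Real.cos (5 * v) + 224000 * Real.cos (6 * v)))
    / (206438400 * v ^ 2 * (Real.sin (v / 2)) ^ 10)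

/-- The variable coefficient `b₄(v)` of the phase-fitted method PF-D0. -/
noncomputable def pfb4 (v : ℝ) : ℝ :=
  (30675810 * v ^ 2 * Real.cos v - 42958788 * v ^ 2
      + 75 * (161280 - 611893 * v ^ 2) * Real.cos (3 * v)
      + 140 * (152411 * v ^ 2 - 172800) * Real.cos (4 * v)
      + (24192000 - 17594587 * v ^ 2) * Real.cos (5 * v)
      - 12096000 * Real.cos (6 * v))
    / (51609600 * v ^ 2 * (Real.sin (v / 2)) ^ 10)

/-- The variable coefficient `b₅(v)` of the phase-fitted method PF-D0. -/
noncomputable def pfb5 (v : ℝ) : ℝ :=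
  ((-61351620) * v ^ 2 * Real.cos (2 * v) + 85936557 * v ^ 2
      + 30 * (6120959 * v ^ 2 - 1411200) * Real.cos (3 * v)
      + 25 * (3386880 - 3191761 * v ^ 2) * Real.cos (4 * v)
      + (62092318 * v ^ 2 - 84672000) * Real.cos (5 * v)
      + 42336000 * Real.cos (6 * v))
    / (103219200 * v ^ 2 * (Real.sin (v / 2)) ^ 10)

/-- The variable coefficient `b₆(v)` of the phase-fitted method PF-D0. -/
noncomputable def pfb6 (v : ℝ) : ℝ :=
  (((-171873114) * Real.cos v + 171835152 * Real.cos (2 * v)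
        - 257184477 * Real.cos (3 * v) + 103937264 * Real.cos (4 * v)
        - 75329225 * Real.cos (5 * v)) * v ^ 2
      + 50803200 * (Real.cos (3 * v) - 2 * Real.cos (4 * v)
        + 2 * Real.cos (5 * v) - Real.cos (6 * v)))
    / (103219200 * v ^ 2 * (Real.sin (v / 2)) ^ 10)

noncomputable def cosT (x : ℝ) : ℝ :=
  1 - x^2/2 + x^4/24 - x^6/720 + x^8/40320 - x^10/3628800 + x^12/479001600 - x^14/87178291200

open Complex in
lemma cosT_bound {x : ℝ} (hx : |x| ≤ 1) : |Real.cos x - cosT x| ≤ |x| ^ 16 := by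
  have key : (∑ m ∈ Finset.range 16, ((x:ℂ) * I) ^ m / m.factorial) +
      (∑ m ∈ Finset.range 16, (-(x:ℂ) * I) ^ m / m.factorial) = 2 * ((cosT x : ℝ) : ℂ) := by
    have h6 : (I:ℂ)^6 = -1 := by rw [show (6:ℕ) = 2*3 from rfl, pow_mul, I_sq]; norm_num
    have h8 : (I:ℂ)^8 = 1 := by rw [show (8:ℕ) = 2*4 from rfl, pow_mul, I_sq]; norm_num
    have h10 : (I:ℂ)^10 = -1 := by rw [show (10:ℕ) = 2*5 from rfl, pow_mul, I_sq]; norm_num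
    have h12 : (I:ℂ)^12 = 1 := by rw [show (12:ℕ) = 2*6 from rfl, pow_mul, I_sq]; norm_num
    have h14 : (I:ℂ)^14 = -1 := by rw [show (14:ℕ) = 2*7 from rfl, pow_mul, I_sq]; norm_num
    simp only [cosT]
    simp [Finset.sum_range_succ, Nat.factorial]
    ring_nf
    rw [I_sq, show (I:ℂ)^4 = 1 from by rw [show (4:ℕ) = 2*2 from rfl, pow_mul, I_sq]; norm_num,
      h6, h8, h10, h12, h14]
    ring_nf
  set S1 := ∑ m ∈ Finset.range 16, ((x:ℂ) * I) ^ m / m.factorial with hS1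
  set S2 := ∑ m ∈ Finset.range 16, (-(x:ℂ) * I) ^ m / m.factorial with hS2
  have hc : Complex.cos x = (Complex.exp ((x:ℂ)*I) + Complex.exp (-(x:ℂ)*I))/2 := by
    rw [Complex.cos]
  have h1 : Complex.cos x - ((cosT x : ℝ):ℂ) =
      ((Complex.exp ((x:ℂ)*I) - S1) + (Complex.exp (-(x:ℂ)*I) - S2)) / 2 := by
    linear_combination hc + key/2
  have hxc1 : ‖(x:ℂ)*I‖ ≤ 1 := by simpa using hx
  have hxc2 : ‖-(x:ℂ)*I‖ ≤ 1 := by simpa using hx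
  have hb1 := Complex.exp_bound hxc1 (n := 16) (by norm_num)
  have hb2 := Complex.exp_bound hxc2 (n := 16) (by norm_num)
  rw [← hS1] at hb1
  rw [← hS2] at hb2
  have habs1 : ‖(x:ℂ)*I‖ = |x| := by simp
  have habs2 : ‖-(x:ℂ)*I‖ = |x| := by simp
  rw [habs1] at hb1
  rw [habs2] at hb2
  calc |Real.cos x - cosT x| = ‖((Real.cos x - cosT x : ℝ) : ℂ)‖ :=
        (by rw [Complex.norm_real, Real.norm_eq_abs])
    _ = ‖Complex.cos x - ((cosT x:ℝ):ℂ)‖ := by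
        rw [Complex.ofReal_sub, Complex.ofReal_cos]
    _ = ‖((Complex.exp ((x:ℂ)*I) - S1) + (Complex.exp (-(x:ℂ)*I) - S2)) / 2‖ := by
        rw [h1]
    _ ≤ (‖Complex.exp ((x:ℂ)*I) - S1‖ + ‖Complex.exp (-(x:ℂ)*I) - S2‖)/2 := by
        rw [norm_div, Complex.norm_two]
        gcongr
        exact norm_add_le _ _
    _ ≤ (|x|^16 * (((Nat.succ 16 : ℕ) : ℝ) * (((Nat.factorial 16 : ℕ) : ℝ) * ((16:ℕ):ℝ))⁻¹)
        + |x|^16 * (((Nat.succ 16 : ℕ) : ℝ) * (((Nat.factorial 16 : ℕ) : ℝ) * ((16:ℕ):ℝ))⁻¹))/2 := by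
        have := add_le_add hb1 hb2
        linarith
    _ ≤ |x|^16 := by
        have h0 : (0:ℝ) ≤ |x|^16 := by positivity
        have h1 : (((Nat.succ 16 : ℕ) : ℝ) * (((Nat.factorial 16 : ℕ) : ℝ) * ((16:ℕ):ℝ))⁻¹) ≤ 1 := by
          norm_num [Nat.factorial]
        nlinarith

noncomputable def pfA (v : ℝ) : ℝ :=
  30675810 * v ^ 2 * Real.cos v - 42958788 * v ^ 2
    + 75 * (161280 - 611893 * v ^ 2) * Real.cos (3 * v)
    + 140 * (152411 * v ^ 2 - 172800) * Real.cos (4 * v)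
    + (24192000 - 17594587 * v ^ 2) * Real.cos (5 * v)
    - 12096000 * Real.cos (6 * v)

noncomputable def pfB (v : ℝ) : ℝ :=
  100800 * v ^ 2 * (126 - 210 * Real.cos v + 120 * Real.cos (2*v)
    - 45 * Real.cos (3*v) + 10 * Real.cos (4*v) - Real.cos (5*v))

lemma pfB_eq (v : ℝ) : pfB v = 51609600 * v ^ 2 * (Real.sin (v / 2)) ^ 10 := by
  have hs : Real.sin (v/2)^2 = (1 - Real.cos v)/2 := by
    have h1 := Real.cos_two_mul' (v/2)
    have h2 := Real.sin_sq_add_cos_sq (v/2)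
    rw [show 2*(v/2) = v by ring] at h1
    linarith
  have h2 : Real.cos (2*v) = 2*Real.cos v^2 - 1 := Real.cos_two_mul v
  have h3 : Real.cos (3*v) = 4*Real.cos v^3 - 3*Real.cos v := Real.cos_three_mul v
  have h4 : Real.cos (4*v) = 8*Real.cos v^4 - 8*Real.cos v^2 + 1 := by
    have h := Real.cos_add_cos (4*v) (2*v)
    rw [show (4*v+2*v)/2 = 3*v by ring, show (4*v-2*v)/2 = v by ring, h3, h2] at h
    linear_combination h
  have h5 : Real.cos (5*v) = 16*Real.cos v^5 - 20*Real.cos v^3 + 5*Real.cos v := by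
    have h := Real.cos_add_cos (5*v) (3*v)
    rw [show (5*v+3*v)/2 = 4*v by ring, show (5*v-3*v)/2 = v by ring, h4, h3] at h
    linear_combination h
  have h10 : Real.sin (v/2)^10 = ((1 - Real.cos v)/2)^5 := by
    rw [show (10:ℕ) = 2*5 from rfl, pow_mul, hs]
  rw [pfB, h2, h3, h4, h5, h10]
  ring

lemma err_le {v : ℝ} (hv0 : 0 ≤ v) (hv : v ≤ 1/6) {k : ℝ} (hk0 : 0 ≤ k) (hk : k ≤ 6) :
    |Real.cos (k*v) - cosT (k*v)| ≤ k ^ 16 * v ^ 16 := by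
  have hkv : 0 ≤ k * v := mul_nonneg hk0 hv0
  have h1 : |k*v| ≤ 1 := by rw [abs_of_nonneg hkv]; nlinarith
  have := cosT_bound h1
  rwa [abs_of_nonneg hkv, mul_pow] at this

lemma term_le {q v E C M : ℝ} (n : ℕ) (hn : n ≤ 16) (hv0 : 0 < v) (hv1 : v ≤ 1)
    (hE : |E| ≤ C * v ^ 16) (hq : |q| ≤ M) : |q * E| ≤ M * C * v ^ n := by
  have hC : 0 ≤ C * v ^ 16 := (abs_nonneg E).trans hE
  have hCn : 0 ≤ C := by nlinarith [pow_pos hv0 16]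
  have h16 : v ^ 16 ≤ v ^ n := pow_le_pow_of_le_one hv0.le hv1 hn
  have hM : 0 ≤ M := (abs_nonneg q).trans hq
  calc |q * E| = |q| * |E| := abs_mul _ _
    _ ≤ M * (C * v ^ 16) := mul_le_mul hq hE (abs_nonneg E) hM
    _ ≤ M * (C * v ^ n) := mul_le_mul_of_nonneg_left (mul_le_mul_of_nonneg_left h16 hCn) hM
    _ = M * C * v ^ n := by ring

lemma abs7 (a b c d e f g : ℝ) :
    |a + b + c + d + e + f + g| ≤ |a| + |b| + |c| + |d| + |e| + |f| + |g| := by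
  calc |a + b + c + d + e + f + g| ≤ |a + b + c + d + e + f| + |g| := abs_add_le _ _
    _ ≤ |a + b + c + d + e| + |f| + |g| := by have := abs_add_le (a+b+c+d+e) f; linarith
    _ ≤ |a + b + c + d| + |e| + |f| + |g| := by have := abs_add_le (a+b+c+d) e; linarith
    _ ≤ |a + b + c| + |d| + |e| + |f| + |g| := by have := abs_add_le (a+b+c) d; linarith
    _ ≤ |a + b| + |c| + |d| + |e| + |f| + |g| := by have := abs_add_le (a+b) c; linarith
    _ ≤ |a| + |b| + |c| + |d| + |e| + |f| + |g| := by have := abs_add_le a b; linarith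

open Filter in
lemma lim_aux {f : ℝ → ℝ} {α K : ℝ} {m : ℕ}
    (h : ∀ v : ℝ, 0 < v → v ≤ 1/6 → |f v - α * v ^ m| ≤ K * v ^ (m+1)) :
    Tendsto (fun v => f v / v ^ m) (nhdsWithin 0 (Set.Ioi 0)) (nhds α) := by
  have hmem : Set.Ioc (0:ℝ) (1/6) ∈ nhdsWithin (0:ℝ) (Set.Ioi 0) :=
    Ioc_mem_nhdsGT_of_mem ⟨le_refl 0, by norm_num⟩
  have hK : 0 ≤ K := by
    have := h (1/6) (by norm_num) (le_refl _)
    have h2 : (0:ℝ) < (1/6:ℝ)^(m+1) := by positivity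
    nlinarith [abs_nonneg (f (1/6) - α * (1/6:ℝ)^m)]
  have hb : ∀ᶠ v in nhdsWithin (0:ℝ) (Set.Ioi 0), |f v / v ^ m - α| ≤ K * v := by
    filter_upwards [hmem] with v hv
    have hv0 : 0 < v := hv.1
    have hvm : (0:ℝ) < v ^ m := pow_pos hv0 m
    have hh := h v hv.1 hv.2
    have heq : f v / v ^ m - α = (f v - α * v ^ m) / v ^ m := by
      field_simp
    rw [heq, abs_div, abs_of_pos hvm, div_le_iff₀ hvm]
    calc |f v - α * v ^ m| ≤ K * v ^ (m+1) := hh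
      _ = K * v * v ^ m := by ring
  have hlin : Tendsto (fun v : ℝ => K * v) (nhdsWithin 0 (Set.Ioi 0)) (nhds 0) := by
    have : Tendsto (fun v : ℝ => K * v) (nhds 0) (nhds (K * 0)) :=
      (continuous_const.mul continuous_id).tendsto 0
    rw [mul_zero] at this
    exact this.mono_left nhdsWithin_le_nhds
  have hz : Tendsto (fun v => f v / v ^ m - α) (nhdsWithin (0:ℝ) (Set.Ioi 0)) (nhds 0) :=
    squeeze_zero_norm' hb hlin
  have := hz.add_const α
  simpa using this

set_option maxHeartbeats 2000000 in
lemma estA {v : ℝ} (hv0 : 0 < v) (hv : v ≤ 1/6) :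
    |pfA v - (-67855831/44) * v^12| ≤ (10:ℝ)^21 * v^(12+1) := by
  have hv1 : v ≤ 1 := by linarith
  have hsq0 : (0:ℝ) ≤ v^2 := sq_nonneg v
  have hsq1 : v^2 ≤ 1 := by nlinarith
  have e1 := err_le hv0.le hv (k:=1) (by norm_num) (by norm_num)
  have e2 := err_le hv0.le hv (k:=2) (by norm_num) (by norm_num)
  have e3 := err_le hv0.le hv (k:=3) (by norm_num) (by norm_num)
  have e4 := err_le hv0.le hv (k:=4) (by norm_num) (by norm_num)
  have e5 := err_le hv0.le hv (k:=5) (by norm_num) (by norm_num)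
  have e6 := err_le hv0.le hv (k:=6) (by norm_num) (by norm_num)
  have hid : pfA v - (-67855831/44) * v^12
      = ((1965674967/2002)*v^14 + (30627881269/26208)*v^16)
        + (30675810*v^2) * (Real.cos ((1:ℝ)*v) - cosT ((1:ℝ)*v))
        + 0 * (Real.cos ((2:ℝ)*v) - cosT ((2:ℝ)*v))
        + (75*161280 - 75*611893*v^2) * (Real.cos (3*v) - cosT (3*v))
        + (140*152411*v^2 - 140*172800) * (Real.cos (4*v) - cosT (4*v))
        + (24192000 - 17594587*v^2) * (Real.cos (5*v) - cosT (5*v))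
        + (-12096000) * (Real.cos (6*v) - cosT (6*v)) := by
    rw [show (1:ℝ)*v = v by ring]
    simp only [pfA, cosT]
    ring
  have h14 : v^14 ≤ v^13 := pow_le_pow_of_le_one hv0.le hv1 (by norm_num)
  have h16 : v^16 ≤ v^13 := pow_le_pow_of_le_one hv0.le hv1 (by norm_num)
  have h13 : (0:ℝ) ≤ v^13 := by positivity
  have t0 : |(1965674967/2002)*v^14 + (30627881269/26208)*v^16| ≤ 10^7 * v^13 := by
    rw [abs_le]
    constructor <;> nlinarith [pow_nonneg hv0.le 14, pow_nonneg hv0.le 16]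
  have t1 : |(30675810*v^2) * (Real.cos ((1:ℝ)*v) - cosT ((1:ℝ)*v))|
      ≤ 30675811 * (1:ℝ)^16 * v^13 :=
    term_le 13 (by norm_num) hv0 hv1 e1 (by rw [abs_le]; constructor <;> nlinarith)
  have t2 : |(0:ℝ) * (Real.cos ((2:ℝ)*v) - cosT ((2:ℝ)*v))| ≤ 1 * (2:ℝ)^16 * v^13 :=
    term_le 13 (by norm_num) hv0 hv1 e2 (by norm_num)
  have t3 : |(75*161280 - 75*611893*v^2) * (Real.cos (3*v) - cosT (3*v))|
      ≤ 45891975 * (3:ℝ)^16 * v^13 :=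
    term_le 13 (by norm_num) hv0 hv1 e3 (by rw [abs_le]; constructor <;> nlinarith)
  have t4 : |(140*152411*v^2 - 140*172800) * (Real.cos (4*v) - cosT (4*v))|
      ≤ 45529540 * (4:ℝ)^16 * v^13 :=
    term_le 13 (by norm_num) hv0 hv1 e4 (by rw [abs_le]; constructor <;> nlinarith)
  have t5 : |(24192000 - 17594587*v^2) * (Real.cos (5*v) - cosT (5*v))|
      ≤ 41786587 * (5:ℝ)^16 * v^13 :=
    term_le 13 (by norm_num) hv0 hv1 e5 (by rw [abs_le]; constructor <;> nlinarith)
  have t6 : |(-12096000:ℝ) * (Real.cos (6*v) - cosT (6*v))| ≤ 12096000 * (6:ℝ)^16 * v^13 :=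
    term_le 13 (by norm_num) hv0 hv1 e6 (by rw [abs_le]; constructor <;> nlinarith)
  rw [hid]
  refine le_trans (abs7 _ _ _ _ _ _ _) (le_trans (add_le_add (add_le_add (add_le_add (add_le_add
    (add_le_add (add_le_add t0 t1) t2) t3) t4) t5) t6) ?_)
  rw [show (10:ℝ)^21 * v^(12+1) = 10^21 * v^13 from by norm_num]
  nlinarith [h13]

set_option maxHeartbeats 2000000 in
lemma estB {v : ℝ} (hv0 : 0 < v) (hv : v ≤ 1/6) :
    |pfB v - 50400 * v^12| ≤ (10:ℝ)^21 * v^(12+1) := by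
  have hv1 : v ≤ 1 := by linarith
  have hsq0 : (0:ℝ) ≤ v^2 := sq_nonneg v
  have hsq1 : v^2 ≤ 1 := by nlinarith
  have e1 := err_le hv0.le hv (k:=1) (by norm_num) (by norm_num)
  have e2 := err_le hv0.le hv (k:=2) (by norm_num) (by norm_num)
  have e3 := err_le hv0.le hv (k:=3) (by norm_num) (by norm_num)
  have e4 := err_le hv0.le hv (k:=4) (by norm_num) (by norm_num)
  have e5 := err_le hv0.le hv (k:=5) (by norm_num) (by norm_num)
  have e6 := err_le hv0.le hv (k:=6) (by norm_num) (by norm_num)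
  have hid : pfB v - 50400 * v^12
      = ((-21000)*v^14 + 4200*v^16)
        + (-21168000*v^2) * (Real.cos ((1:ℝ)*v) - cosT ((1:ℝ)*v))
        + (12096000*v^2) * (Real.cos ((2:ℝ)*v) - cosT ((2:ℝ)*v))
        + (-4536000*v^2) * (Real.cos (3*v) - cosT (3*v))
        + (1008000*v^2) * (Real.cos (4*v) - cosT (4*v))
        + (-100800*v^2) * (Real.cos (5*v) - cosT (5*v))
        + 0 * (Real.cos (6*v) - cosT (6*v)) := by
    rw [show (1:ℝ)*v = v by ring]
    simp only [pfB, cosT]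
    ring
  have h14 : v^14 ≤ v^13 := pow_le_pow_of_le_one hv0.le hv1 (by norm_num)
  have h16 : v^16 ≤ v^13 := pow_le_pow_of_le_one hv0.le hv1 (by norm_num)
  have h13 : (0:ℝ) ≤ v^13 := by positivity
  have t0 : |(-21000:ℝ)*v^14 + 4200*v^16| ≤ 10^6 * v^13 := by
    rw [abs_le]
    constructor <;> nlinarith [pow_nonneg hv0.le 14, pow_nonneg hv0.le 16]
  have t1 : |(-21168000*v^2) * (Real.cos ((1:ℝ)*v) - cosT ((1:ℝ)*v))|
      ≤ 21168000 * (1:ℝ)^16 * v^13 :=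
    term_le 13 (by norm_num) hv0 hv1 e1 (by rw [abs_le]; constructor <;> nlinarith)
  have t2 : |(12096000*v^2) * (Real.cos ((2:ℝ)*v) - cosT ((2:ℝ)*v))|
      ≤ 12096000 * (2:ℝ)^16 * v^13 :=
    term_le 13 (by norm_num) hv0 hv1 e2 (by rw [abs_le]; constructor <;> nlinarith)
  have t3 : |(-4536000*v^2) * (Real.cos (3*v) - cosT (3*v))| ≤ 4536000 * (3:ℝ)^16 * v^13 :=
    term_le 13 (by norm_num) hv0 hv1 e3 (by rw [abs_le]; constructor <;> nlinarith)
  have t4 : |(1008000*v^2) * (Real.cos (4*v) - cosT (4*v))| ≤ 1008000 * (4:ℝ)^16 * v^13 :=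
    term_le 13 (by norm_num) hv0 hv1 e4 (by rw [abs_le]; constructor <;> nlinarith)
  have t5 : |(-100800*v^2) * (Real.cos (5*v) - cosT (5*v))| ≤ 100800 * (5:ℝ)^16 * v^13 :=
    term_le 13 (by norm_num) hv0 hv1 e5 (by rw [abs_le]; constructor <;> nlinarith)
  have t6 : |(0:ℝ) * (Real.cos (6*v) - cosT (6*v))| ≤ 1 * (6:ℝ)^16 * v^13 :=
    term_le 13 (by norm_num) hv0 hv1 e6 (by norm_num)
  rw [hid]
  refine le_trans (abs7 _ _ _ _ _ _ _) (le_trans (add_le_add (add_le_add (add_le_add (add_le_add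
    (add_le_add (add_le_add t0 t1) t2) t3) t4) t5) t6) ?_)
  rw [show (10:ℝ)^21 * v^(12+1) = 10^21 * v^13 from by norm_num]
  nlinarith [h13]

set_option maxHeartbeats 2000000 in
lemma estG {v : ℝ} (hv0 : 0 < v) (hv : v ≤ 1/6) :
    |(pfA v - (-67855831/2217600) * pfB v) - (16301796103/48048) * v^14|
      ≤ (10:ℝ)^21 * v^(14+1) := by
  have hv1 : v ≤ 1 := by linarith
  have hsq0 : (0:ℝ) ≤ v^2 := sq_nonneg v
  have hsq1 : v^2 ≤ 1 := by nlinarith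
  have e1 := err_le hv0.le hv (k:=1) (by norm_num) (by norm_num)
  have e2 := err_le hv0.le hv (k:=2) (by norm_num) (by norm_num)
  have e3 := err_le hv0.le hv (k:=3) (by norm_num) (by norm_num)
  have e4 := err_le hv0.le hv (k:=4) (by norm_num) (by norm_num)
  have e5 := err_le hv0.le hv (k:=5) (by norm_num) (by norm_num)
  have e6 := err_le hv0.le hv (k:=6) (by norm_num) (by norm_num)
  have hid : (pfA v - (-67855831/2217600) * pfB v) - (16301796103/48048) * v^14
      = ((373955977685/288288)*v^16)
        + (-6787428345/11*v^2) * (Real.cos ((1:ℝ)*v) - cosT ((1:ℝ)*v))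
        + (4071349860/11*v^2) * (Real.cos ((2:ℝ)*v) - cosT ((2:ℝ)*v))
        + (12096000 - 4063135845/22*v^2) * (Real.cos (3*v) - cosT (3*v))
        + (-24192000 + 573992095/11*v^2) * (Real.cos (4*v) - cosT (4*v))
        + (24192000 - 454936745/22*v^2) * (Real.cos (5*v) - cosT (5*v))
        + (-12096000) * (Real.cos (6*v) - cosT (6*v)) := by
    rw [show (1:ℝ)*v = v by ring]
    simp only [pfA, pfB, cosT]
    ring
  have h16 : v^16 ≤ v^15 := pow_le_pow_of_le_one hv0.le hv1 (by norm_num)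
  have h15 : (0:ℝ) ≤ v^15 := by positivity
  have t0 : |(373955977685/288288:ℝ)*v^16| ≤ 10^7 * v^15 := by
    rw [abs_le]
    constructor <;> nlinarith [pow_nonneg hv0.le 16]
  have t1 : |(-6787428345/11*v^2) * (Real.cos ((1:ℝ)*v) - cosT ((1:ℝ)*v))|
      ≤ 617038941 * (1:ℝ)^16 * v^15 :=
    term_le 15 (by norm_num) hv0 hv1 e1 (by rw [abs_le]; constructor <;> nlinarith)
  have t2 : |(4071349860/11*v^2) * (Real.cos ((2:ℝ)*v) - cosT ((2:ℝ)*v))|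
      ≤ 370122715 * (2:ℝ)^16 * v^15 :=
    term_le 15 (by norm_num) hv0 hv1 e2 (by rw [abs_le]; constructor <;> nlinarith)
  have t3 : |(12096000 - 4063135845/22*v^2) * (Real.cos (3*v) - cosT (3*v))|
      ≤ 196783993 * (3:ℝ)^16 * v^15 :=
    term_le 15 (by norm_num) hv0 hv1 e3 (by rw [abs_le]; constructor <;> nlinarith)
  have t4 : |(-24192000 + 573992095/11*v^2) * (Real.cos (4*v) - cosT (4*v))|
      ≤ 76373100 * (4:ℝ)^16 * v^15 :=
    term_le 15 (by norm_num) hv0 hv1 e4 (by rw [abs_le]; constructor <;> nlinarith)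
  have t5 : |(24192000 - 454936745/22*v^2) * (Real.cos (5*v) - cosT (5*v))|
      ≤ 44870943 * (5:ℝ)^16 * v^15 :=
    term_le 15 (by norm_num) hv0 hv1 e5 (by rw [abs_le]; constructor <;> nlinarith)
  have t6 : |(-12096000:ℝ) * (Real.cos (6*v) - cosT (6*v))| ≤ 12096000 * (6:ℝ)^16 * v^15 :=
    term_le 15 (by norm_num) hv0 hv1 e6 (by rw [abs_le]; constructor <;> nlinarith)
  rw [hid]
  refine le_trans (abs7 _ _ _ _ _ _ _) (le_trans (add_le_add (add_le_add (add_le_add (add_le_add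
    (add_le_add (add_le_add t0 t1) t2) t3) t4) t5) t6) ?_)
  rw [show (10:ℝ)^21 * v^(14+1) = 10^21 * v^15 from by norm_num]
  nlinarith [h15]

lemma pfb4_eq (v : ℝ) : pfb4 v = pfA v / pfB v := by
  rw [pfB_eq]
  simp only [pfb4, pfA]

/-- The PF-D0 coefficient `pfb4` tends to the corresponding classical
Quinlan–Tremaine coefficient as `v → 0⁺`, with the stated `v²`-Taylor coefficient. -/
theorem pfd0_b4_limit :
    Tendsto pfb4 (nhdsWithin 0 (Set.Ioi 0)) (nhds (-67855831 / 2217600)) ∧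
    Tendsto (fun v : ℝ => (pfb4 v - (-67855831 / 2217600)) / v ^ 2)
      (nhdsWithin 0 (Set.Ioi 0)) (nhds (16301796103 / 2421619200)) := by
  have hA : Tendsto (fun v : ℝ => pfA v / v ^ 12) (nhdsWithin 0 (Set.Ioi 0))
      (nhds (-67855831/44)) := lim_aux (fun v h1 h2 => estA h1 h2)
  have hB : Tendsto (fun v : ℝ => pfB v / v ^ 12) (nhdsWithin 0 (Set.Ioi 0))
      (nhds 50400) := lim_aux (fun v h1 h2 => estB h1 h2)
  have hG : Tendsto (fun v : ℝ => (pfA v - (-67855831/2217600) * pfB v) / v ^ 14)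
      (nhdsWithin 0 (Set.Ioi 0)) (nhds (16301796103/48048)) :=
    lim_aux (fun v h1 h2 => estG h1 h2)
  have hmem : Set.Ioc (0:ℝ) (1/6) ∈ nhdsWithin (0:ℝ) (Set.Ioi 0) :=
    Ioc_mem_nhdsGT_of_mem ⟨le_refl 0, by norm_num⟩
  have hBpos : ∀ v ∈ Set.Ioc (0:ℝ) (1/6), 0 < pfB v := by
    intro v hv
    rw [pfB_eq]
    have hv0 : 0 < v := hv.1
    have hs : 0 < Real.sin (v/2) :=
      Real.sin_pos_of_pos_of_lt_pi (by linarith) (by nlinarith [Real.pi_gt_three, hv.2])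
    positivity
  constructor
  · have h := hA.div hB (by norm_num)
    rw [show ((-67855831:ℝ)/44) / 50400 = -67855831 / 2217600 by norm_num] at h
    refine h.congr' ?_
    filter_upwards [hmem] with v hv
    have hv0 : v ≠ 0 := ne_of_gt hv.1
    have hB0 : pfB v ≠ 0 := ne_of_gt (hBpos v hv)
    rw [pfb4_eq, Pi.div_apply]
    field_simp
  · have h := hG.div hB (by norm_num)
    rw [show ((16301796103:ℝ)/48048) / 50400 = 16301796103 / 2421619200 by norm_num] at h
    refine h.congr' ?_
    filter_upwards [hmem] with v hv
    have hv0 : v ≠ 0 := ne_of_gt hv.1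
    have hB0 : pfB v ≠ 0 := ne_of_gt (hBpos v hv)
    rw [pfb4_eq, Pi.div_apply]
    field_simp
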